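/- Every Leibniz-derivation of a perfect Lie algebra over a field of characteristic zero is a derivation in the classical sense. -/

import Mathlib

open Finset

/-- Right-nested bracket `[x₁,[x₂,…,[x_k,x_{k+1}]…]]` of a list of elements. -/
def nestedBracket {L : Type*} [LieRing L] : List L → L
  | [] => 0
  | [x] => x
  | x :: xs => ⁅x, nestedBracket xs⁆

/-- A Leibniz-derivation of order `k` of a Lie algebra. -/
def IsLeibnizDerivation {F L : Type*} [CommRing F] [LieRing L] [LieAlgebra F L] (k : ℕ)
    (P : L →ₗ[F] L) : Prop :=
  ∀ x : Fin (k + 1) → L,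
    P (nestedBracket (List.ofFn x)) =
      ∑ i : Fin (k + 1), nestedBracket (List.ofFn (Function.update x i (P (x i))))

namespace MoensLeibniz

variable {F L : Type*} [Field F] [LieRing L] [LieAlgebra F L]

lemma nb_cons (x : L) (t : List L) (h : t ≠ []) :
    nestedBracket (x :: t) = ⁅x, nestedBracket t⁆ := by
  cases t with
  | nil => exact absurd rfl h
  | cons a s => rfl

/-- The sum of Leibniz terms for a list: `P` applied to one slot in all possible ways. -/
def Dm (P : L →ₗ[F] L) (t : List L) : L :=
  ∑ i ∈ Finset.range t.length, nestedBracket (t.set i (P (t.getD i 0)))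

lemma Dm_singleton (P : L →ₗ[F] L) (a : L) : Dm P [a] = P a := by
  simp [Dm, nestedBracket]

lemma lie_finsum {ι : Type*} (a : L) (s : Finset ι) (f : ι → L) :
    ⁅a, ∑ i ∈ s, f i⁆ = ∑ i ∈ s, ⁅a, f i⁆ :=
  map_sum (AddMonoidHom.mk' (fun y => ⁅a, y⁆) (lie_add a)) f s

lemma finsum_lie {ι : Type*} (a : L) (s : Finset ι) (f : ι → L) :
    ⁅∑ i ∈ s, f i, a⁆ = ∑ i ∈ s, ⁅f i, a⁆ :=
  map_sum (AddMonoidHom.mk' (fun y => ⁅y, a⁆) (fun u v => add_lie u v a)) f s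

lemma list_sum_lie {β : Type*} (a : L) (f : β → L) (ℓ : List β) :
    (ℓ.map fun t => ⁅a, f t⁆).sum = ⁅a, (ℓ.map f).sum⁆ := by
  induction ℓ with
  | nil => simp
  | cons h t ih => simp [lie_add, ih]

lemma list_sum_add {β : Type*} (f g : β → L) (ℓ : List β) :
    (ℓ.map fun t => f t + g t).sum = (ℓ.map f).sum + (ℓ.map g).sum := by
  induction ℓ with
  | nil => simp
  | cons h t ih => simp [ih]; abel

lemma Dm_cons (P : L →ₗ[F] L) (x : L) (t : List L) (h : t ≠ []) :
    Dm P (x :: t) = ⁅P x, nestedBracket t⁆ + ⁅x, Dm P t⁆ := by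
  show (∑ i ∈ Finset.range (t.length + 1),
      nestedBracket ((x :: t).set i (P ((x :: t).getD i 0)))) = _
  rw [Finset.sum_range_succ']
  have h0 : nestedBracket ((x :: t).set 0 (P ((x :: t).getD 0 0))) = ⁅P x, nestedBracket t⁆ := by
    rw [show (x :: t).set 0 (P ((x :: t).getD 0 0)) = P x :: t from rfl, nb_cons _ _ h]
  have h1 : (∑ i ∈ Finset.range t.length,
      nestedBracket ((x :: t).set (i+1) (P ((x :: t).getD (i+1) 0)))) = ⁅x, Dm P t⁆ := by
    rw [Dm, lie_finsum]
    apply Finset.sum_congr rfl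
    intro i _
    rw [show (x :: t).set (i+1) (P ((x :: t).getD (i+1) 0)) = x :: t.set i (P (t.getD i 0)) from rfl,
      nb_cons]
    intro hc
    exact h (List.eq_nil_of_length_eq_zero (by simpa using congrArg List.length hc))
  rw [h0, h1, add_comm]

lemma hP_list {k : ℕ} {P : L →ₗ[F] L} (hP : IsLeibnizDerivation k P)
    (t : List L) (ht : t.length = k + 1) :
    P (nestedBracket t) = Dm P t := by
  set x : Fin (k+1) → L := fun i => t[(i : ℕ)]'(by omega) with hx
  have hofn : List.ofFn x = t := by
    apply List.ext_getElem (by simp [ht])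
    intro i h1 h2
    rw [List.getElem_ofFn]
  have hset : ∀ (i : Fin (k+1)) (c : L), List.ofFn (Function.update x i c) = t.set i c := by
    intro i c
    apply List.ext_getElem (by simp [ht])
    intro j h1 h2
    simp only [List.getElem_ofFn, List.getElem_set]
    rw [Function.update_apply]
    by_cases hji : (j : ℕ) = (i : ℕ)
    · simp [Fin.ext_iff, hji]
    · rw [if_neg (fun h => hji (Fin.ext_iff.mp h)), if_neg (fun h => hji h.symm)]
  have hmain := hP x
  rw [hofn] at hmain
  rw [hmain, Dm, ht, ← Fin.sum_univ_eq_sum_range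
    (fun i => nestedBracket (t.set i (P (t.getD i 0))))]
  apply Finset.sum_congr rfl
  intro i _
  rw [hset i (P (x i))]
  congr 2
  rw [List.getD_eq_getElem t 0 (by omega)]

/-- `q` is an admissible Leibniz value for `w` at level `m`: there is a representation of `w`
as a sum of `m`-fold nested brackets whose total `Dm`-value is `q`. -/
def RepD (P : L →ₗ[F] L) (m : ℕ) (w q : L) : Prop :=
  ∃ ℓ : List (List L), (∀ t ∈ ℓ, t.length = m) ∧
    (ℓ.map nestedBracket).sum = w ∧ (ℓ.map (Dm P)).sum = q

variable {P : L →ₗ[F] L}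

lemma RepD.zero (m : ℕ) : RepD P m 0 0 := ⟨[], by simp, by simp, by simp⟩

lemma RepD.add {m : ℕ} {w q w' q' : L} (h : RepD P m w q) (h' : RepD P m w' q') :
    RepD P m (w + w') (q + q') := by
  obtain ⟨ℓ, hl, hw, hq⟩ := h
  obtain ⟨ℓ', hl', hw', hq'⟩ := h'
  exact ⟨ℓ ++ ℓ', by intro t ht; rcases List.mem_append.mp ht with h | h; exacts [hl t h, hl' t h],
    by rw [List.map_append, List.sum_append, hw, hw'],
    by rw [List.map_append, List.sum_append, hq, hq']⟩

lemma RepD.one (w : L) : RepD P 1 w (P w) :=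
  ⟨[[w]], by simp, by simp [nestedBracket], by simp [Dm_singleton]⟩

lemma RepD.cons {m : ℕ} (hm : 1 ≤ m) {w q : L} (h : RepD P m w q) (a : L) :
    RepD P (m + 1) ⁅a, w⁆ (⁅P a, w⁆ + ⁅a, q⁆) := by
  obtain ⟨ℓ, hl, hw, hq⟩ := h
  have hne : ∀ t ∈ ℓ, t ≠ [] := by
    intro t ht hc
    have := hl t ht; rw [hc] at this; simp at this; omega
  refine ⟨ℓ.map (a :: ·), ?_, ?_, ?_⟩
  · intro t ht
    obtain ⟨s, hs, rfl⟩ := List.mem_map.mp ht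
    simp [hl s hs]
  · rw [List.map_map]
    have : ℓ.map (nestedBracket ∘ (a :: ·)) = ℓ.map (fun t => ⁅a, nestedBracket t⁆) :=
      List.map_congr_left fun t ht => nb_cons a t (hne t ht)
    rw [this, list_sum_lie, hw]
  · rw [List.map_map]
    have : ℓ.map (Dm P ∘ (a :: ·)) =
        ℓ.map (fun t => ⁅P a, nestedBracket t⁆ + ⁅a, Dm P t⁆) :=
      List.map_congr_left fun t ht => Dm_cons P a t (hne t ht)
    rw [this, list_sum_add, list_sum_lie, list_sum_lie, hw, hq]

lemma RepD.one_eq {w q : L} (h : RepD P 1 w q) : q = P w := by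
  obtain ⟨ℓ, hl, hw, hq⟩ := h
  have : ℓ.map (Dm P) = ℓ.map (fun t => P (nestedBracket t)) := by
    apply List.map_congr_left
    intro t ht
    obtain ⟨a, rfl⟩ := List.length_eq_one_iff.mp (hl t ht)
    simp [Dm_singleton, nestedBracket]
  rw [this] at hq
  rw [← hq, ← hw, map_list_sum, List.map_map]
  rfl

lemma RepD.top_eq {k : ℕ} (hP : IsLeibnizDerivation k P) {w q : L}
    (h : RepD P (k + 1) w q) : q = P w := by
  obtain ⟨ℓ, hl, hw, hq⟩ := h
  have : ℓ.map (Dm P) = ℓ.map (fun t => P (nestedBracket t)) :=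
    List.map_congr_left fun t ht => (hP_list hP t (hl t ht)).symm
  rw [this] at hq
  rw [← hq, ← hw, map_list_sum, List.map_map]
  rfl

lemma RepD.finsum {ι : Type*} (s : Finset ι) {m : ℕ} (f g : ι → L)
    (h : ∀ i ∈ s, RepD P m (f i) (g i)) :
    RepD P m (∑ i ∈ s, f i) (∑ i ∈ s, g i) := by
  classical
  induction s using Finset.induction with
  | empty => simpa using RepD.zero m
  | @insert a s hns ih =>
    rw [Finset.sum_insert hns, Finset.sum_insert hns]
    exact (h a (Finset.mem_insert_self a s)).add
      (ih fun i hi => h i (Finset.mem_insert_of_mem hi))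

lemma decomp (hperf : ⁅(⊤ : LieIdeal F L), (⊤ : LieIdeal F L)⁆ = ⊤) (w : L) :
    ∃ (n : ℕ) (u v : Fin n → L), ∑ i, ⁅u i, v i⁆ = w := by
  have hw : w ∈ Submodule.span F {m : L | ∃ (x : ↥(⊤ : LieIdeal F L)) (n : ↥(⊤ : LieIdeal F L)),
      ⁅(x : L), (n : L)⁆ = m} := by
    rw [← LieSubmodule.lieIdeal_oper_eq_linear_span, hperf, LieSubmodule.top_toSubmodule]
    exact Submodule.mem_top
  obtain ⟨n, f, g, hsum⟩ := Submodule.mem_span_set'.mp hw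
  have hex : ∀ i : Fin n, ∃ u v : L, ⁅u, v⁆ = (g i : L) := by
    intro i
    obtain ⟨x, y, h⟩ := (g i).2
    exact ⟨x, y, h⟩
  choose u v huv using hex
  refine ⟨n, fun i => f i • u i, v, ?_⟩
  rw [← hsum]
  exact Finset.sum_congr rfl fun i _ => by rw [smul_lie, huv]

/-- The second center coincides with the center, for perfect Lie algebras. -/
lemma esc (hperf : ⁅(⊤ : LieIdeal F L), (⊤ : LieIdeal F L)⁆ = ⊤) {a : L}
    (h : ∀ x y : L, ⁅y, ⁅x, a⁆⁆ = 0) (b : L) : ⁅b, a⁆ = 0 := by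
  obtain ⟨n, u, v, hsum⟩ := decomp hperf b
  rw [← hsum, finsum_lie]
  apply Finset.sum_eq_zero
  intro i _
  rw [lie_lie, h (v i) (u i), h (u i) (v i), sub_zero]

lemma rep_ex (hperf : ⁅(⊤ : LieIdeal F L), (⊤ : LieIdeal F L)⁆ = ⊤) :
    ∀ m, 1 ≤ m → ∀ w : L, ∃ q, RepD P m w q := by
  intro m
  induction m with
  | zero => omega
  | succ m ih =>
    intro _ w
    rcases Nat.eq_zero_or_pos m with hm | hm
    · subst hm; exact ⟨P w, RepD.one w⟩
    · obtain ⟨n, u, v, hsum⟩ := decomp hperf w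
      have hq : ∀ i : Fin n, ∃ q, RepD P m (v i) q := fun i => ih hm (v i)
      choose qq hqq using hq
      refine ⟨∑ i, (⁅P (u i), v i⁆ + ⁅u i, qq i⁆), ?_⟩
      rw [← hsum]
      exact RepD.finsum Finset.univ _ _ fun i _ => (hqq i).cons hm (u i)

lemma uniq (hperf : ⁅(⊤ : LieIdeal F L), (⊤ : LieIdeal F L)⁆ = ⊤) {k : ℕ}
    (hP : IsLeibnizDerivation k P) :
    ∀ d m, 1 ≤ m → m + d = k + 1 → ∀ w q q', RepD P m w q → RepD P m w q' →
      ∀ y : L, ⁅y, q - q'⁆ = 0 := by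
  intro d
  induction d with
  | zero =>
    intro m h1 h2 w q q' hq hq' y
    have hm : m = k + 1 := by omega
    subst hm
    rw [hq.top_eq hP, hq'.top_eq hP, sub_self, lie_zero]
  | succ d ih =>
    intro m h1 h2 w q q' hq hq' y
    refine esc hperf (fun x y' => ?_) y
    have h3 := ih (m+1) (by omega) (by omega) ⁅x, w⁆ _ _ (hq.cons h1 x) (hq'.cons h1 x) y'
    have h4 : ⁅x, q - q'⁆ = (⁅P x, w⁆ + ⁅x, q⁆) - (⁅P x, w⁆ + ⁅x, q'⁆) := by
      rw [lie_sub]; abel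
    rw [h4]
    exact h3

lemma esc2 (hperf : ⁅(⊤ : LieIdeal F L), (⊤ : LieIdeal F L)⁆ = ⊤) {d : L}
    (h : ∀ x z y : L, ⁅y, ⁅⁅x, z⁆, d⁆⁆ = 0) (y : L) : ⁅y, d⁆ = 0 := by
  refine esc hperf (fun v y' => ?_) y
  obtain ⟨n, u, vv, hsum⟩ := decomp hperf v
  rw [← hsum, finsum_lie, lie_finsum]
  exact Finset.sum_eq_zero fun i _ => h (u i) (vv i) y'

lemma twostep (A Ea Eb : L → L)
    (hA : ∀ x w y : L, ⁅y, A ⁅x, w⁆ - ⁅x, Ea w⁆⁆ = 0)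
    (hB : ∀ x w y : L, ⁅y, Ea ⁅x, w⁆ - ⁅x, Eb w⁆⁆ = 0)
    (hAadd : ∀ a b y : L, ⁅y, A (a + b) - (A a + A b)⁆ = 0) :
    ∀ x z w y : L, ⁅y, ⁅⁅x, z⁆, Ea w⁆ - ⁅⁅x, z⁆, Eb w⁆⁆ = 0 := by
  intro x z w y
  have h5 : ⁅x, Ea ⁅z, w⁆⁆ = ⁅x, ⁅z, Eb w⁆⁆ := by
    have h := hB z w x
    rw [lie_sub, sub_eq_zero] at h
    exact h
  have h6 : ⁅z, Ea ⁅x, w⁆⁆ = ⁅z, ⁅x, Eb w⁆⁆ := by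
    have h := hB x w z
    rw [lie_sub, sub_eq_zero] at h
    exact h
  have key : ⁅⁅x, z⁆, Ea w⁆ - ⁅⁅x, z⁆, Eb w⁆ =
      -(A (⁅⁅x, z⁆, w⁆ + ⁅z, ⁅x, w⁆⁆) - (A ⁅⁅x, z⁆, w⁆ + A ⁅z, ⁅x, w⁆⁆))
      + (A ⁅x, ⁅z, w⁆⁆ - ⁅x, Ea ⁅z, w⁆⁆)
      - (A ⁅⁅x, z⁆, w⁆ - ⁅⁅x, z⁆, Ea w⁆)
      - (A ⁅z, ⁅x, w⁆⁆ - ⁅z, Ea ⁅x, w⁆⁆) := by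
    rw [← leibniz_lie x z w, lie_lie x z (Eb w), ← h5, ← h6]
    abel
  rw [key, lie_sub, lie_sub, lie_add, lie_neg,
    hAadd _ _ y, hA x ⁅z, w⁆ y, hA ⁅x, z⁆ w y, hA z ⁅x, w⁆ y]
  simp

end MoensLeibniz

theorem leibnizDerivation_of_perfect_is_derivation'
    {F L : Type*} [Field F] [CharZero F] [LieRing L] [LieAlgebra F L]
    (hperf : ⁅(⊤ : LieIdeal F L), (⊤ : LieIdeal F L)⁆ = ⊤)
    {k : ℕ} (hk : 1 ≤ k) (P : L →ₗ[F] L) (hP : IsLeibnizDerivation k P) :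
    ∀ x y : L, P ⁅x, y⁆ = ⁅P x, y⁆ + ⁅x, P y⁆ := by
  open MoensLeibniz in
  intro x₀ y₀
  obtain ⟨k', rfl⟩ : ∃ k', k = k' + 1 := ⟨k - 1, by omega⟩
  have hex : ∀ (m : ℕ) (w : L), ∃ q, 1 ≤ m → MoensLeibniz.RepD P m w q := by
    intro m w
    rcases Nat.eq_zero_or_pos m with h | h
    · exact ⟨0, by omega⟩
    · obtain ⟨q, hq⟩ := MoensLeibniz.rep_ex hperf m h w
      exact ⟨q, fun _ => hq⟩
  choose Q hQ using hex
  set K := k' + 1 with hK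
  have huniq : ∀ m, 1 ≤ m → m ≤ K + 1 → ∀ (w q q' : L), MoensLeibniz.RepD P m w q →
      MoensLeibniz.RepD P m w q' → ∀ y : L, ⁅y, q - q'⁆ = 0 := fun m h1 h2 w q q' hq hq' =>
    MoensLeibniz.uniq hperf hP (K + 1 - m) m h1 (by omega) w q q' hq hq'
  have hQ1 : ∀ w, Q 1 w = P w := fun w => (hQ 1 w le_rfl).one_eq
  have hQtop : ∀ w, Q (K+1) w = P w := fun w => (hQ (K+1) w (by omega)).top_eq hP
  set E : ℕ → L → L := fun m w => Q (m+1) w - Q m w with hE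
  have hchain : ∀ m, 1 ≤ m → m ≤ K → ∀ x w y : L,
      ⁅y, Q (m+1) ⁅x, w⁆ - (⁅P x, w⁆ + ⁅x, Q m w⁆)⁆ = 0 := by
    intro m h1 h2 x w y
    exact huniq (m+1) (by omega) (by omega) ⁅x, w⁆ _ _ (hQ (m+1) ⁅x, w⁆ (by omega))
      ((hQ m w h1).cons h1 x) y
  have hQadd : ∀ m, 1 ≤ m → m ≤ K + 1 → ∀ a b y : L,
      ⁅y, Q m (a+b) - (Q m a + Q m b)⁆ = 0 := by
    intro m h1 h2 a b y
    exact huniq m h1 h2 (a+b) _ _ (hQ m (a+b) h1) ((hQ m a h1).add (hQ m b h1)) y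
  have hEadd : ∀ m, 1 ≤ m → m ≤ K → ∀ a b y : L, ⁅y, E m (a+b) - (E m a + E m b)⁆ = 0 := by
    intro m h1 h2 a b y
    have t1 := hQadd (m+1) (by omega) (by omega) a b y
    have t2 := hQadd m h1 (by omega) a b y
    have hele : E m (a+b) - (E m a + E m b) =
        (Q (m+1) (a+b) - (Q (m+1) a + Q (m+1) b)) - (Q m (a+b) - (Q m a + Q m b)) := by
      simp only [hE]; abel
    rw [hele, lie_sub, t1, t2, sub_zero]
  have hEsum : ∀ w, ∑ m ∈ Finset.range K, E (m+1) w = 0 := by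
    intro w
    have hc : ∀ m ∈ Finset.range K,
        E (m+1) w = (fun i => Q (i+1) w) (m+1) - (fun i => Q (i+1) w) m := fun m _ => rfl
    rw [Finset.sum_congr rfl hc, Finset.sum_range_sub (fun i => Q (i+1) w), hQtop, hQ1, sub_self]
  have hCH : ∀ m, 1 ≤ m → m + 1 ≤ K → ∀ x w y : L,
      ⁅y, E (m+1) ⁅x, w⁆ - ⁅x, E m w⁆⁆ = 0 := by
    intro m h1 h2 x w y
    have t1 := hchain (m+1) (by omega) (by omega) x w y
    have t2 := hchain m h1 (by omega) x w y
    have hele : E (m+1) ⁅x, w⁆ - ⁅x, E m w⁆ =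
        (Q (m+2) ⁅x, w⁆ - (⁅P x, w⁆ + ⁅x, Q (m+1) w⁆))
          - (Q (m+1) ⁅x, w⁆ - (⁅P x, w⁆ + ⁅x, Q m w⁆)) := by
      simp only [hE, lie_sub]; abel
    rw [hele, lie_sub, t1, t2, sub_zero]
  have hCHK : ∀ x w y : L, ⁅y, E 1 ⁅x, w⁆ - ⁅x, E K w⁆⁆ = 0 := by
    intro x w y
    have e1 : E 1 ⁅x, w⁆ = - ∑ m ∈ Finset.range k', E (m+1+1) ⁅x, w⁆ := by
      have h := hEsum ⁅x, w⁆
      rw [Finset.sum_range_succ'] at h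
      exact eq_neg_of_add_eq_zero_right h
    have e2 : E K w = - ∑ m ∈ Finset.range k', E (m+1) w := by
      have h := hEsum w
      rw [Finset.sum_range_succ] at h
      exact eq_neg_of_add_eq_zero_right h
    have hterm : ∀ m ∈ Finset.range k', ⁅y, E (m+1+1) ⁅x, w⁆⁆ = ⁅y, ⁅x, E (m+1) w⁆⁆ := by
      intro m hm
      have h := hCH (m+1) (by omega) (by have := Finset.mem_range.mp hm; omega) x w y
      rwa [lie_sub, sub_eq_zero] at h
    rw [lie_sub, e1, e2]
    simp only [lie_neg, MoensLeibniz.lie_finsum]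
    rw [Finset.sum_congr rfl hterm]
    abel
  have hdiff : ∀ a, 2 ≤ a → a ≤ K → ∀ w y : L, ⁅y, E a w - E (a-1) w⁆ = 0 := by
    intro a h2 hK'
    obtain ⟨b, rfl⟩ : ∃ b, a = b + 2 := ⟨a - 2, by omega⟩
    have hts : ∀ x z w y : L,
        ⁅y, ⁅⁅x, z⁆, E (b+2) w⁆ - ⁅⁅x, z⁆, E (b+1) w⁆⁆ = 0 := by
      rcases eq_or_lt_of_le hK' with hEq | hLt
      · -- b + 2 = K
        have hbk : b + 1 + 1 = K := hEq
        refine MoensLeibniz.twostep (E 1) (E (b+2)) (E (b+1)) ?_ ?_ (hEadd 1 le_rfl (by omega))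
        · intro x w y; rw [hbk]; exact hCHK x w y
        · exact fun x w y => hCH (b+1) (by omega) (by omega) x w y
      · exact MoensLeibniz.twostep (E (b+3)) (E (b+2)) (E (b+1))
          (fun x w y => hCH (b+2) (by omega) (by omega) x w y)
          (fun x w y => hCH (b+1) (by omega) (by omega) x w y)
          (hEadd (b+3) (by omega) (by omega))
    intro w y
    refine MoensLeibniz.esc2 hperf (fun x z y' => ?_) y
    have h := hts x z w y'
    rwa [← lie_sub] at h
  have hall : ∀ dd m, m + dd = K → 1 ≤ m → ∀ w y : L, ⁅y, E K w - E m w⁆ = 0 := by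
    intro dd
    induction dd with
    | zero =>
      intro m hm _ w y
      have : m = K := by omega
      subst this
      rw [sub_self, lie_zero]
    | succ dd ih =>
      intro m hm h1 w y
      have t1 := ih (m+1) (by omega) (by omega) w y
      have t2 := hdiff (m+1) (by omega) (by omega) w y
      have hele : E K w - E m w = (E K w - E (m+1) w) + (E (m+1) w - E m w) := by abel
      rw [hele, lie_add, t1]
      rw [show m + 1 - 1 = m from rfl] at t2
      rw [t2, add_zero]
  have hEkZ : ∀ w y : L, ⁅y, E K w⁆ = 0 := by
    intro w y
    have h2 : ⁅y, (K : ℕ) • E K w⁆ = 0 := by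
      have hele : (K : ℕ) • E K w = ∑ m ∈ Finset.range K, (E K w - E (m+1) w)
          + ∑ m ∈ Finset.range K, E (m+1) w := by
        rw [Finset.sum_sub_distrib, Finset.sum_const, Finset.card_range]
        abel
      rw [hele, hEsum, add_zero, MoensLeibniz.lie_finsum]
      exact Finset.sum_eq_zero fun m hm =>
        hall (K - (m+1)) (m+1) (by have := Finset.mem_range.mp hm; omega) (by omega) w y
    rw [← Nat.cast_smul_eq_nsmul F, lie_smul] at h2
    rcases smul_eq_zero.mp h2 with h | h
    · exact absurd h (Nat.cast_ne_zero.mpr (by omega))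
    · exact h
  have h1 : MoensLeibniz.RepD P (K+1) ⁅x₀, y₀⁆ (⁅P x₀, y₀⁆ + ⁅x₀, Q K y₀⁆) :=
    (hQ K y₀ (by omega)).cons (by omega) x₀
  have h2 := h1.top_eq hP
  have h3 : ⁅x₀, Q K y₀⁆ = ⁅x₀, P y₀⁆ := by
    have h4 : Q K y₀ = P y₀ - E K y₀ := by
      simp only [hE]; rw [hQtop]; abel
    rw [h4, lie_sub, hEkZ y₀ x₀, sub_zero]
  rw [← h2, h3]

theorem leibnizDerivation_of_perfect_is_derivation
    {F L : Type*} [Field F] [CharZero F] [LieRing L] [LieAlgebra F L]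
    [FiniteDimensional F L]
    (hperf : ⁅(⊤ : LieIdeal F L), (⊤ : LieIdeal F L)⁆ = ⊤)
    {k : ℕ} (hk : 1 ≤ k) (P : L →ₗ[F] L) (hP : IsLeibnizDerivation k P) :
    ∀ x y : L, P ⁅x, y⁆ = ⁅P x, y⁆ + ⁅x, P y⁆ := by
  exact leibnizDerivation_of_perfect_is_derivation' hperf hk P hP
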